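/- Let F = Σ_{k≥0} (ξ^k/k!) h(h−1)⋯(h−k+1) ⊗ e^k be the Jordanian twist in U(b) ⊗ U(b)[[ξ]] where [h,e] = e, and let S be the antipode of U(b) (S(h) = −h, S(e) = −e). Then u := Σ_i f_i^{(1)} S(f_i^{(2)}) = Σ_{k≥0} ((−ξ)^k/k!) h(h−1)⋯(h−k+1) e^k = exp(−ξ h e). -/

import Mathlib

open scoped TensorProduct

noncomputable def expPS {A : Type*} [Ring A] [Algebra ℚ A] (X : PowerSeries A) :
    PowerSeries A :=
  PowerSeries.mk fun m =>
    ∑ n ∈ Finset.range (m + 1), ((n.factorial : ℚ)⁻¹) • (PowerSeries.coeff m) (X ^ n)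

/-- The falling factorial `a(a−1)⋯(a−k+1)`. -/
noncomputable def fallFac {A : Type*} [Ring A] (a : A) (k : ℕ) : A :=
  ((List.range k).map (fun j : ℕ => a - (j : A))).prod

lemma fallFac_zero {A : Type*} [Ring A] (a : A) : fallFac a 0 = 1 := by
  simp [fallFac]

lemma fallFac_succ {A : Type*} [Ring A] (a : A) (k : ℕ) :
    fallFac a (k + 1) = fallFac a k * (a - (k : A)) := by
  simp [fallFac, List.range_succ]

/-- for the Jordanian twist `F = Σ_k (ξ^k/k!) h(h−1)⋯(h−k+1) ⊗ e^k`, the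
Drinfeld element `u = Σ f⁽¹⁾S(f⁽²⁾)` equals
`Σ_k ((−ξ)^k/k!) h(h−1)⋯(h−k+1) e^k = exp(−ξ h e)`. -/
theorem jordanian_twist_u_element {A : Type*} [Ring A] [Algebra ℚ A]
    (h e : A) (hhe : h * e - e * h = e)
    (S : A →ₗ[ℚ] A)
    (hS1 : S 1 = 1)
    (hSmul : ∀ a b : A, S (a * b) = S b * S a)
    (hSh : S h = -h) (hSe : S e = -e) :
    -- the Jordanian twist
    let F : PowerSeries (A ⊗[ℚ] A) :=
      PowerSeries.mk fun k => ((k.factorial : ℚ)⁻¹) • (fallFac h k ⊗ₜ[ℚ] (e ^ k))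
    -- the map x ⊗ y ↦ x · S(y)
    let muS : (A ⊗[ℚ] A) →ₗ[ℚ] A :=
      (LinearMap.mul' ℚ A).comp (TensorProduct.map LinearMap.id S)
    -- u = Σ_i f_i⁽¹⁾ S(f_i⁽²⁾), applied coefficientwise
    let u : PowerSeries A := PowerSeries.mk fun k => muS (PowerSeries.coeff k F)
    u = (PowerSeries.mk fun k =>
          (((-1 : ℚ) ^ k) * (k.factorial : ℚ)⁻¹) • (fallFac h k * e ^ k)) ∧
    u = expPS (PowerSeries.mk fun m => if m = 1 then -(h * e) else 0) := by
  intro F muS u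
  have heh : e * h = h * e - e := by
    have := sub_eq_iff_eq_add.mp hhe
    rw [this]; abel
  -- commuting e^k past h
  have hpow : ∀ k : ℕ, e ^ k * h = (h - (k : A)) * e ^ k := by
    intro k
    induction k with
    | zero => simp
    | succ k ih =>
      calc e ^ (k + 1) * h = e ^ k * (e * h) := by
            rw [pow_succ, mul_assoc]
        _ = e ^ k * (h * e) - e ^ k * e := by rw [heh, mul_sub]
        _ = ((h - (k : A)) * e ^ k) * e - e ^ k * e := by
            rw [← mul_assoc, ih]
        _ = (h - ((k + 1 : ℕ) : A)) * e ^ (k + 1) := by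
            push_cast
            rw [pow_succ]
            noncomm_ring
  have he_pow : ∀ k : ℕ, (h * e) ^ k = fallFac h k * e ^ k := by
    intro k
    induction k with
    | zero => simp [fallFac_zero]
    | succ k ih =>
      calc (h * e) ^ (k + 1) = (h * e) ^ k * (h * e) := pow_succ _ _
        _ = fallFac h k * (e ^ k * h) * e := by
            rw [ih]; rw [mul_assoc, mul_assoc, mul_assoc]
        _ = fallFac h k * ((h - (k : A)) * e ^ k) * e := by rw [hpow]
        _ = fallFac h (k + 1) * e ^ (k + 1) := by
            rw [fallFac_succ, pow_succ, ← mul_assoc, ← mul_assoc, mul_assoc]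
  have hSe_pow : ∀ k : ℕ, S (e ^ k) = ((-1 : ℚ) ^ k) • e ^ k := by
    intro k
    induction k with
    | zero => simpa using hS1
    | succ k ih =>
      calc S (e ^ (k + 1)) = S (e * e ^ k) := by rw [pow_succ']
        _ = S (e ^ k) * S e := hSmul _ _
        _ = ((-1 : ℚ) ^ k • e ^ k) * (-e) := by rw [ih, hSe]
        _ = ((-1 : ℚ) ^ (k + 1)) • e ^ (k + 1) := by
            rw [smul_mul_assoc, mul_neg, ← pow_succ, pow_succ (-1 : ℚ)]
            rw [mul_smul]
            simp
  have hu : ∀ k : ℕ, PowerSeries.coeff k u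
      = (((-1 : ℚ) ^ k) * (k.factorial : ℚ)⁻¹) • (fallFac h k * e ^ k) := by
    intro k
    simp only [u, F, muS, PowerSeries.coeff_mk, map_smul, LinearMap.comp_apply,
      TensorProduct.map_tmul, LinearMap.id_apply, LinearMap.mul'_apply, hSe_pow,
      mul_smul_comm, smul_smul]
    rw [mul_comm]
  constructor
  · ext k
    rw [hu, PowerSeries.coeff_mk]
  · -- second equality
    set c : A := -(h * e) with hc
    have hX : (PowerSeries.mk fun m => if m = 1 then c else 0)
        = PowerSeries.monomial 1 c := by
      ext m
      rw [PowerSeries.coeff_mk, PowerSeries.coeff_monomial]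
    have hXpow : ∀ n : ℕ, (PowerSeries.monomial 1 c) ^ n
        = PowerSeries.monomial n (c ^ n) := by
      intro n
      induction n with
      | zero => simp
      | succ n ih =>
        rw [pow_succ, ih, pow_succ]
        have := MvPowerSeries.monomial_mul_monomial
          (Finsupp.single () n) (Finsupp.single () 1) (c ^ n) c
        simpa [PowerSeries.monomial, Finsupp.single_add] using this
    ext m
    rw [hu, expPS, PowerSeries.coeff_mk, hX]
    have : ∀ n : ℕ, ((n.factorial : ℚ)⁻¹) •
        (PowerSeries.coeff m) ((PowerSeries.monomial 1 c) ^ n)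
        = if m = n then ((n.factorial : ℚ)⁻¹) • (c ^ n) else 0 := by
      intro n
      rw [hXpow, PowerSeries.coeff_monomial]
      split <;> simp
    rw [Finset.sum_congr rfl fun n _ => this n]
    rw [Finset.sum_ite_eq (Finset.range (m + 1)) m (fun n => ((n.factorial : ℚ)⁻¹) • (c ^ n))]
    rw [if_pos (Finset.self_mem_range_succ m)]
    have hcpow : c ^ m = ((-1 : ℚ) ^ m) • (fallFac h m * e ^ m) := by
      rw [hc, neg_pow, he_pow]
      rw [show ((-1 : A) ^ m * (fallFac h m * e ^ m)) = ((-1 : ℚ) ^ m) • (fallFac h m * e ^ m) by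
        rw [Algebra.smul_def]; simp]
    rw [hcpow, smul_smul, mul_comm]
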